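/- For bi-periodic Fibonacci polynomials and m ≥ n ≥ 1 with m + n even, q_{m−n}(x) = (−1)^(n+1) (q_{m+1}(x) q_n(x) − q_m(x) q_{n+1}(x)). -/
import Mathlib


/-- Bi-periodic Fibonacci polynomials (evaluated at x): q 0 = 0, q 1 = 1,
    q n = a*x*q (n-1) + q (n-2) if n odd, q n = b*x*q (n-1) + q (n-2) if n even. -/
def bpFibP (a b x : ℝ) : ℕ → ℝ
  | 0 => 0
  | 1 => 1
  | n + 2 => (if Even (n + 2) then b * x else a * x) * bpFibP a b x (n + 1) + bpFibP a b x n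

lemma bpFibP_rec (a b x : ℝ) (k : ℕ) :
    bpFibP a b x (k + 2) =
      (if Even (k + 2) then b * x else a * x) * bpFibP a b x (k + 1) + bpFibP a b x k := rfl

lemma bpFibP_aux (a b x : ℝ) : ∀ n m : ℕ, n ≤ m → Even (m + n) →
    bpFibP a b x (m - n) =
      (-1 : ℝ) ^ (n + 1) *
        (bpFibP a b x (m + 1) * bpFibP a b x n - bpFibP a b x m * bpFibP a b x (n + 1)) := by
  intro n
  induction n with
  | zero =>
    intro m _ _
    simp [bpFibP]
  | succ n ih =>
    intro m hle he
    obtain ⟨k, rfl⟩ : ∃ k, m = k + 1 := ⟨m - 1, by omega⟩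
    have hkn : Even (k + n) := by
      simp [Nat.even_iff] at he ⊢; omega
    have hparity : Even (k + 2) ↔ Even (n + 2) := by
      simp [Nat.even_iff] at hkn ⊢; omega
    have h1 := ih k (by omega) hkn
    by_cases hek : Even (k + 2)
    · have hen : Even (n + 2) := hparity.mp hek
      rw [show k + 1 + 1 = k + 2 from rfl, show n + 1 + 1 = n + 2 from rfl,
        bpFibP_rec, bpFibP_rec, if_pos hek, if_pos hen, Nat.succ_sub_succ, h1]
      ring
    · have hen : ¬ Even (n + 2) := fun h => hek (hparity.mpr h)
      rw [show k + 1 + 1 = k + 2 from rfl, show n + 1 + 1 = n + 2 from rfl,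
        bpFibP_rec, bpFibP_rec, if_neg hek, if_neg hen, Nat.succ_sub_succ, h1]
      ring

theorem bpFibP_sub_even (a b x : ℝ) (ha : a ≠ 0) (hb : b ≠ 0) (m n : ℕ)
    (hn : 1 ≤ n) (hmn : n ≤ m) (h : Even (m + n)) :
    bpFibP a b x (m - n) =
      (-1 : ℝ) ^ (n + 1) *
        (bpFibP a b x (m + 1) * bpFibP a b x n - bpFibP a b x m * bpFibP a b x (n + 1)) := by
  exact bpFibP_aux a b x n m hmn h
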